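/- Let n ≥ 3 and let α₁, …, αₙ be vectors in ℝ^{n−1} such that any n−1 of them are linearly independent. For z = (z₁, …, zₙ) ∈ ℂⁿ, let 𝔥_z = {v ∈ ℝ^{n−1} : ⟨α_k, v⟩ = 0 for every k with z_k ≠ 0}. Then 𝔥_z is a one-dimensional vector subspace of ℝ^{n−1} if and only if exactly two of the coordinates z₁, …, zₙ are zero, i.e., if and only if z lies in W_{i,j} = {z ∈ ℂⁿ : z_i = z_j = 0 and z_k ≠ 0 for all k ≠ i, j} for some pair 1 ≤ i < j ≤ n. -/

import Mathlib

open scoped BigOperators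

/-- The standard pairing `ℝ^d → (ℝ^d)*`. -/
noncomputable def stdPairing (d : ℕ) : (Fin d → ℝ) →ₗ[ℝ] Module.Dual ℝ (Fin d → ℝ) :=
  LinearMap.mk₂ ℝ (fun a v => ∑ m, a m * v m)
    (by intro a a' v; simp [add_mul, Finset.sum_add_distrib])
    (by intro c a v; simp [Finset.mul_sum, mul_assoc])
    (by intro a v v'; simp [mul_add, Finset.sum_add_distrib])
    (by intro c a v; simp [Finset.mul_sum]; ring_nf; simp [mul_assoc, mul_comm, mul_left_comm])

lemma stdPairing_apply (d : ℕ) (a v : Fin d → ℝ) :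
    stdPairing d a v = ∑ m, a m * v m := rfl

lemma stdPairing_injective (d : ℕ) : Function.Injective (stdPairing d) := by
  intro a b h
  funext m
  have := congrArg (fun f => f (Pi.single m 1)) h
  simpa [stdPairing_apply, Pi.single_apply, mul_ite, Finset.sum_ite_eq'] using this

lemma card_zero_two_iff (n : ℕ) (z : Fin n → ℂ) :
    (Finset.univ.filter (fun k => z k = 0)).card = 2 ↔
      (∃ i j : Fin n, i < j ∧ z i = 0 ∧ z j = 0 ∧
        ∀ k : Fin n, k ≠ i → k ≠ j → z k ≠ 0) := by
  constructor
  · intro h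
    obtain ⟨a, b, hab, hZ⟩ := Finset.card_eq_two.mp h
    have ha : z a = 0 := by
      have : a ∈ Finset.univ.filter (fun k => z k = 0) := by rw [hZ]; simp
      simpa using this
    have hb : z b = 0 := by
      have : b ∈ Finset.univ.filter (fun k => z k = 0) := by rw [hZ]; simp
      simpa using this
    have hk : ∀ k : Fin n, k ≠ a → k ≠ b → z k ≠ 0 := by
      intro k hka hkb hzk
      have : k ∈ Finset.univ.filter (fun k => z k = 0) := by simp [hzk]
      rw [hZ] at this
      simp at this
      rcases this with h | h
      · exact hka h
      · exact hkb h
    rcases lt_or_gt_of_ne hab with h | h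
    · exact ⟨a, b, h, ha, hb, hk⟩
    · exact ⟨b, a, h, hb, ha, fun k h1 h2 => hk k h2 h1⟩
  · rintro ⟨i, j, hij, hi, hj, hk⟩
    have hZ : Finset.univ.filter (fun k => z k = 0) = {i, j} := by
      ext k
      simp only [Finset.mem_filter, Finset.mem_univ, true_and, Finset.mem_insert,
        Finset.mem_singleton]
      constructor
      · intro h
        by_contra hc
        push_neg at hc
        exact hk k hc.1 hc.2 h
      · rintro (rfl | rfl) <;> assumption
    rw [hZ, Finset.card_insert_of_notMem (by simp [hij.ne]), Finset.card_singleton]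

theorem stabilizer_algebra_one_dim_iff (n : ℕ) (hn : 3 ≤ n)
    (α : Fin n → (Fin (n - 1) → ℝ))
    (hind : ∀ i : Fin n, LinearIndependent ℝ (fun k : {k : Fin n // k ≠ i} => α k))
    (z : Fin n → ℂ) :
    (∃ W : Submodule ℝ (Fin (n - 1) → ℝ),
        (W : Set (Fin (n - 1) → ℝ)) =
          {v : Fin (n - 1) → ℝ | ∀ k : Fin n, z k ≠ 0 → ∑ m, α k m * v m = 0} ∧
        Module.finrank ℝ W = 1) ↔
      (∃ i j : Fin n, i < j ∧ z i = 0 ∧ z j = 0 ∧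
        ∀ k : Fin n, k ≠ i → k ≠ j → z k ≠ 0) := by
  classical
  set Φ := stdPairing (n - 1) with hPhi
  set U : Submodule ℝ (Module.Dual ℝ (Fin (n - 1) → ℝ)) :=
    Submodule.span ℝ (Set.range fun k : {k : Fin n // z k ≠ 0} => Φ (α k)) with hU
  set H := U.dualCoannihilator with hH
  -- the carrier set of H is the prescribed set
  have hset : (H : Set (Fin (n - 1) → ℝ)) =
      {v : Fin (n - 1) → ℝ | ∀ k : Fin n, z k ≠ 0 → ∑ m, α k m * v m = 0} := by
    ext v
    simp only [SetLike.mem_coe, hH, Submodule.mem_dualCoannihilator, Set.mem_setOf_eq]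
    constructor
    · intro h k hk
      have := h (Φ (α k)) (Submodule.subset_span ⟨⟨k, hk⟩, rfl⟩)
      simpa [hPhi, stdPairing_apply] using this
    · intro h f hf
      have hle : U ≤ LinearMap.ker (Module.Dual.eval ℝ (Fin (n - 1) → ℝ) v) := by
        rw [hU, Submodule.span_le]
        rintro _ ⟨k, rfl⟩
        simp only [SetLike.mem_coe, LinearMap.mem_ker, Module.Dual.eval_apply]
        simpa [hPhi, stdPairing_apply] using h k.1 k.2
      simpa using hle hf
  set Z := Finset.univ.filter (fun k => z k = 0) with hZdef
  have hZn : Z.card ≤ n := le_trans (Finset.card_filter_le _ _) (by simp)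
  have hsum : Module.finrank ℝ U + Module.finrank ℝ H = n - 1 := by
    have := Subspace.finrank_add_finrank_dualCoannihilator_eq U
    rwa [Module.finrank_fin_fun] at this
  have hcardS : Fintype.card {k : Fin n // z k ≠ 0} = n - Z.card := by
    rw [Fintype.card_subtype]
    have h1 : Finset.univ.filter (fun k : Fin n => z k ≠ 0) = Finset.univ \ Z := by
      rw [hZdef, ← Finset.filter_not]
    rw [h1, Finset.card_sdiff_of_subset (Finset.filter_subset _ _)]
    simp [hZdef]
  have hli : ∀ i : Fin n, z i = 0 →
      LinearIndependent ℝ (fun k : {k : Fin n // z k ≠ 0} => Φ (α k)) := by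
    intro i hzi
    have h1 : LinearIndependent ℝ (fun k : {k : Fin n // z k ≠ 0} => α k) := by
      have hcomp := (hind i).comp
        (fun k : {k : Fin n // z k ≠ 0} =>
          (⟨k.1, fun h => k.2 (by rw [h]; exact hzi)⟩ : {k : Fin n // k ≠ i}))
        (by intro a b hab
            simp only [Subtype.mk.injEq] at hab
            exact Subtype.ext hab)
      simpa [Function.comp_def] using hcomp
    exact h1.map' Φ (LinearMap.ker_eq_bot.mpr (stdPairing_injective (n - 1)))
  have hfinU : ∀ i : Fin n, z i = 0 → Module.finrank ℝ U = n - Z.card := by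
    intro i hzi
    rw [hU, finrank_span_eq_card (hli i hzi), hcardS]
  have hfinU0 : Z.card = 0 → Module.finrank ℝ U = n - 1 := by
    intro h0
    have hall : ∀ k : Fin n, z k ≠ 0 := by
      intro k hk
      have : k ∈ Z := by simp [hZdef, hk]
      rw [Finset.card_eq_zero.mp h0] at this
      simp at this
    have i0 : Fin n := ⟨0, by omega⟩
    have hli0 : LinearIndependent ℝ (fun k : {k : Fin n // k ≠ i0} => Φ (α k)) := by
      simpa [Function.comp_def] using
        (hind i0).map' Φ (LinearMap.ker_eq_bot.mpr (stdPairing_injective (n - 1)))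
    have hle' : Submodule.span ℝ (Set.range fun k : {k : Fin n // k ≠ i0} => Φ (α k)) ≤ U := by
      rw [hU, Submodule.span_le]
      rintro _ ⟨k, rfl⟩
      exact Submodule.subset_span ⟨⟨k.1, hall k.1⟩, rfl⟩
    have h2 : n - 1 ≤ Module.finrank ℝ U := by
      have := Submodule.finrank_mono hle'
      rwa [finrank_span_eq_card hli0, Fintype.card_subtype_compl, Fintype.card_fin,
        Fintype.card_unique] at this
    omega
  rw [← card_zero_two_iff n z, ← hZdef]
  constructor
  · rintro ⟨W, hW, hr⟩
    have hWH : W = H := SetLike.coe_injective (hW.trans hset.symm)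
    rw [hWH] at hr
    rcases Nat.eq_zero_or_pos Z.card with h0 | hpos
    · have := hfinU0 h0
      omega
    · obtain ⟨i, hi⟩ := Finset.card_pos.mp hpos
      have hzi : z i = 0 := by simpa [hZdef] using hi
      have := hfinU i hzi
      omega
  · intro hc
    have hpos : 0 < Z.card := by omega
    obtain ⟨i, hi⟩ := Finset.card_pos.mp hpos
    have hzi : z i = 0 := by simpa [hZdef] using hi
    have := hfinU i hzi
    exact ⟨H, hset, by omega⟩
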